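/- Let L ⊆ R with (D ∩ L) ∖ {max L} ≠ ∅. Then every consistent axiom system 𝒜 satisfying 𝒜 ∼ 𝒜_L ∪ {τ^𝒜} is equivalent to 𝒜_L, and for such 𝒜 the set of 𝒜-p-surprising days is exactly (D ∩ L) ∖ {max L}. -/

import Mathlib

open scoped Classical

/-- Propositional formulas over the six variables `Y_r`, `r ∈ R = Fin 6`
(`0 = Mo, 1 = Tu, 2 = We, 3 = Th, 4 = Fr, 5 = none`). -/
inductive Form : Type where
  | bot : Form
  | var : Fin 6 → Form
  | imp : Form → Form → Form
deriving DecidableEq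

def Form.neg (φ : Form) : Form := φ.imp .bot
def Form.top : Form := Form.neg .bot
def Form.or (φ ψ : Form) : Form := φ.neg.imp ψ
def Form.and (φ ψ : Form) : Form := (φ.imp ψ.neg).neg

/-- Evaluation in the model `r ∈ R`: variable `Y_i` is true iff `i = r`. -/
def Form.eval (r : Fin 6) : Form → Bool
  | .bot => false
  | .var i => decide (i = r)
  | .imp φ ψ => !(Form.eval r φ) || Form.eval r ψ

/-- `r ⊨ φ`. -/
def Sat (r : Fin 6) (φ : Form) : Prop := Form.eval r φ = true

def bigOr (l : List Form) : Form := l.foldr Form.or .bot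
def bigAnd (l : List Form) : Form := l.foldr Form.and Form.top

/-- `χ_B = ⋁_{r ∈ B} Y_r`. -/
def chi (B : Finset (Fin 6)) : Form := bigOr ((B.sort (· ≤ ·)).map Form.var)

/-- The axiom `(Ax_{=1})`: exactly one of the variables `Y_r` is true. -/
def Ax1 : Form :=
  (chi Finset.univ).and
    (bigAnd ((List.finRange 6).flatMap (fun i =>
      (List.finRange 6).map (fun j =>
        if i = j then Form.top else ((Form.var i).neg).or ((Form.var j).neg)))))

/-- Provability from the axiom system `A` (by soundness and completeness of
propositional logic, semantic consequence over the six models). -/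
def Proves (A : Set Form) (φ : Form) : Prop :=
  ∀ r : Fin 6, (∀ ψ ∈ A, Sat r ψ) → Sat r φ

/-- `K` is an `A`-p-knowledge set: `A ⊢ ⟨T ∈ K⟩`. -/
def KSet (A : Set Form) (K : Finset (Fin 6)) : Prop := Proves A (chi K)

/-- `K_A`, the intersection of all `A`-p-knowledge sets. -/
noncomputable def KA (A : Set Form) : Finset (Fin 6) :=
  Finset.univ.filter (fun r => ∀ K : Finset (Fin 6), KSet A K → r ∈ K)

/-- The days `D = {Mo,…,Fr}`. -/
def DaysF : Finset (Fin 6) := {0, 1, 2, 3, 4}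

/-- `⟨T ≤ d⟩`. -/
def TLe (d : Fin 6) : Form := chi (Finset.univ.filter (· ≤ d))
/-- `⟨T ≥ d⟩`. -/
def TGe (d : Fin 6) : Form := chi (Finset.univ.filter (d ≤ ·))
/-- `⟨T = d⟩`. -/
def TEq (d : Fin 6) : Form := Form.var d

/-- Equivalence of axiom systems: mutual provability. -/
def EquivAx (A₁ A₂ : Set Form) : Prop :=
  (∀ φ ∈ A₂, Proves A₁ φ) ∧ (∀ φ ∈ A₁, Proves A₂ φ)

/-- Iverson bracket: `⊤` if `P` holds, else `⊥`. -/
noncomputable def iver (P : Prop) : Form := if P then Form.top else Form.bot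

/-- The maximum of `K` (with default `Mo` for `K = ∅`). -/
def maxD (K : Finset (Fin 6)) : Fin 6 := (K.max).getD 0

/-- `K ∖ {max K}` (with `∅ ∖ {max ∅} = ∅`). -/
def erasemax (K : Finset (Fin 6)) : Finset (Fin 6) := K.erase (maxD K)

/-- `σ^A := ⋀_{K ⊆ R} ([K_A ⊆ K] → χ_{K∖{max K}})`. -/
noncomputable def sigmaA (A : Set Form) : Form :=
  bigAnd (((Finset.univ : Finset (Finset (Fin 6))).toList).map
    (fun K => (iver (KA A ⊆ K)).imp (chi (erasemax K))))

/-- The set of `A`-p-surprising days. -/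
def Dsurpr (A : Set Form) : Set (Fin 6) :=
  {d | d ∈ DaysF ∧ d ∈ KA A ∧ ¬ Proves A (TLe d)}

/-- `A` is inconsistent iff it proves every formula. -/
def Inconsistent (A : Set Form) : Prop := ∀ φ, Proves A φ

/-- `τ^A := ⋁_{d ∈ D} ⋀_{K ⊆ R} ([A ⊢ χ_K] → [d ∈ K∖{max K}])`. -/
noncomputable def tauA (A : Set Form) : Form :=
  bigOr ((DaysF.sort (· ≤ ·)).map (fun d =>
    bigAnd (((Finset.univ : Finset (Finset (Fin 6))).toList).map
      (fun K => (iver (Proves A (chi K))).imp (iver (d ∈ erasemax K))))))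

/-- The axiom system `𝒜_L = {(Ax_{=1}), χ_L}`. -/
def AL (L : Finset (Fin 6)) : Set Form := {Ax1, chi L}

lemma eval_or (r : Fin 6) (φ ψ : Form) :
    Form.eval r (φ.or ψ) = (Form.eval r φ || Form.eval r ψ) := by
  simp [Form.or, Form.neg, Form.eval]

lemma eval_and (r : Fin 6) (φ ψ : Form) :
    Form.eval r (φ.and ψ) = (Form.eval r φ && Form.eval r ψ) := by
  simp [Form.and, Form.neg, Form.eval]

lemma eval_bigOr (r : Fin 6) (l : List Form) :
    Form.eval r (bigOr l) = l.any (Form.eval r) := by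
  induction l with
  | nil => rfl
  | cons a t ih =>
    show Form.eval r (a.or (bigOr t)) = _
    simp [eval_or, ih]

lemma eval_bigAnd (r : Fin 6) (l : List Form) :
    Form.eval r (bigAnd l) = l.all (Form.eval r) := by
  induction l with
  | nil => rfl
  | cons a t ih =>
    show Form.eval r (a.and (bigAnd t)) = _
    simp [eval_and, ih]

lemma sat_chi (r : Fin 6) (B : Finset (Fin 6)) : Sat r (chi B) ↔ r ∈ B := by
  simp only [Sat, chi, eval_bigOr, List.any_eq_true, List.mem_map,
    Finset.mem_sort]
  constructor
  · rintro ⟨φ, ⟨i, hi, rfl⟩, hev⟩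
    have : i = r := by simpa [Form.eval] using hev
    exact this ▸ hi
  · intro hr
    exact ⟨Form.var r, ⟨r, hr, rfl⟩, by simp [Form.eval]⟩

lemma sat_imp (r : Fin 6) (φ ψ : Form) :
    Sat r (φ.imp ψ) ↔ (Sat r φ → Sat r ψ) := by
  cases hφ : Form.eval r φ <;> simp [Sat, Form.eval, hφ]

lemma sat_iver (r : Fin 6) (P : Prop) : Sat r (iver P) ↔ P := by
  by_cases hP : P <;> simp [iver, hP, Sat, Form.top, Form.neg, Form.eval]

lemma sat_Ax1 (r : Fin 6) : Sat r Ax1 := by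
  rw [Ax1, Sat, eval_and, Bool.and_eq_true]
  refine ⟨(sat_chi r _).2 (Finset.mem_univ r), ?_⟩
  rw [eval_bigAnd, List.all_eq_true]
  intro φ hφ
  simp only [List.mem_flatMap, List.mem_map, List.mem_finRange] at hφ
  obtain ⟨i, -, j, -, rfl⟩ := hφ
  by_cases hij : i = j
  · simp [hij, Form.top, Form.neg, Form.eval]
  · rcases eq_or_ne i r with rfl | hir
    · have hjr : j ≠ i := fun hh => hij hh.symm
      simp [if_neg hij, eval_or, Form.neg, Form.eval, hjr]
    · simp [if_neg hij, eval_or, Form.neg, Form.eval, hir]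

/-- The models of `A`, as a finset. -/
noncomputable def modSet (A : Set Form) : Finset (Fin 6) :=
  Finset.univ.filter (fun r => ∀ ψ ∈ A, Sat r ψ)

lemma mem_modSet {A : Set Form} {r : Fin 6} :
    r ∈ modSet A ↔ ∀ ψ ∈ A, Sat r ψ := by simp [modSet]

lemma proves_iff {A : Set Form} {φ : Form} :
    Proves A φ ↔ ∀ r ∈ modSet A, Sat r φ := by
  simp [Proves, mem_modSet]

lemma proves_chi {A : Set Form} {K : Finset (Fin 6)} :
    Proves A (chi K) ↔ modSet A ⊆ K := by
  simp only [proves_iff, sat_chi]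
  exact ⟨fun h r hr => h r hr, fun h r hr => h hr⟩

lemma KA_eq (A : Set Form) : KA A = modSet A := by
  ext r
  simp only [KA, Finset.mem_filter, Finset.mem_univ, true_and, KSet]
  constructor
  · intro hk
    exact (Finset.mem_filter.1 hk).2 (modSet A) (proves_chi.2 (le_refl _))
  · intro hr
    refine Finset.mem_filter.2 ⟨Finset.mem_univ _, fun K hK => ?_⟩
    exact proves_chi.1 hK hr

lemma maxD_eq_max' {K : Finset (Fin 6)} (h : K.Nonempty) :
    maxD K = K.max' h := by
  simp [maxD, ← Finset.coe_max' h, Option.getD]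

lemma maxD_mem {K : Finset (Fin 6)} (h : K.Nonempty) : maxD K ∈ K := by
  rw [maxD_eq_max' h]; exact K.max'_mem h

lemma le_maxD {K : Finset (Fin 6)} {d : Fin 6} (hd : d ∈ K) : d ≤ maxD K := by
  rw [maxD_eq_max' ⟨d, hd⟩]; exact K.le_max' d hd

lemma mem_erasemax_of_subset {M K : Finset (Fin 6)} {d : Fin 6}
    (hd : d ∈ erasemax M) (hMK : M ⊆ K) : d ∈ erasemax K := by
  rw [erasemax, Finset.mem_erase] at hd ⊢
  obtain ⟨hne, hdM⟩ := hd
  have hlt : d < maxD M := lt_of_le_of_ne (le_maxD hdM) hne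
  have hM : M.Nonempty := ⟨d, hdM⟩
  have : maxD M ≤ maxD K := le_maxD (hMK (maxD_mem hM))
  exact ⟨ne_of_lt (lt_of_lt_of_le hlt this), hMK hdM⟩

lemma sat_tau {A : Set Form} (r : Fin 6) :
    Sat r (tauA A) ↔
      ∃ d ∈ DaysF, ∀ K : Finset (Fin 6), Proves A (chi K) → d ∈ erasemax K := by
  rw [Sat, tauA, eval_bigOr]
  simp only [List.any_eq_true, List.mem_map, Finset.mem_sort]
  constructor
  · rintro ⟨φ, ⟨d, hd, rfl⟩, hev⟩
    rw [eval_bigAnd] at hev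
    simp only [List.all_eq_true, List.mem_map] at hev
    refine ⟨d, hd, fun K hK => ?_⟩
    have h2 := hev _ ⟨K, Finset.mem_toList.2 (Finset.mem_univ K), rfl⟩
    have h3 := (sat_imp r _ _).1 h2 ((sat_iver r _).2 hK)
    exact (sat_iver r _).1 h3
  · rintro ⟨d, hd, hall⟩
    refine ⟨_, ⟨d, hd, rfl⟩, ?_⟩
    rw [eval_bigAnd]
    simp only [List.all_eq_true, List.mem_map]
    rintro φ ⟨K, -, rfl⟩
    exact (sat_imp r _ _).2
      (fun hP => (sat_iver r _).2 (hall K ((sat_iver r _).1 hP)))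

lemma modSet_AL (L : Finset (Fin 6)) : modSet (AL L) = L := by
  ext r
  simp only [mem_modSet, AL, Set.mem_insert_iff, Set.mem_singleton_iff]
  constructor
  · intro hr
    exact (sat_chi r L).1 (hr _ (Or.inr rfl))
  · rintro hr ψ (rfl | rfl)
    · exact sat_Ax1 r
    · exact (sat_chi r L).2 hr

/-- If `(D ∩ L) ∖ {max L} ≠ ∅`, then every consistent axiom system `A` with
`A ∼ 𝒜_L ∪ {τ^A}` is equivalent to `𝒜_L`, and its set of `A`-p-surprising
days is exactly `(D ∩ L) ∖ {max L}`. -/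
theorem stmt_12 (L : Finset (Fin 6)) (h : ((DaysF ∩ L).erase (maxD L)).Nonempty)
    (A : Set Form) (hcons : ¬ Inconsistent A)
    (heq : EquivAx A (AL L ∪ {tauA A})) :
    EquivAx A (AL L) ∧ Dsurpr A = ↑((DaysF ∩ L).erase (maxD L)) := by
  obtain ⟨hA2, hA1⟩ := heq
  -- A is consistent, so modSet A is nonempty
  have hMne : (modSet A).Nonempty := by
    by_contra hempty
    rw [Finset.not_nonempty_iff_eq_empty] at hempty
    exact hcons (fun φ => proves_iff.2 (fun r hr => by
      rw [hempty] at hr; exact absurd hr (Finset.notMem_empty r)))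
  obtain ⟨r0, hr0⟩ := hMne
  -- A proves tauA A, hence the tau condition holds
  have htau : Proves A (tauA A) := hA2 _ (Set.mem_union_right _ rfl)
  have hcond : ∃ d ∈ DaysF, ∀ K : Finset (Fin 6),
      Proves A (chi K) → d ∈ erasemax K :=
    (sat_tau r0).1 (proves_iff.1 htau r0 hr0)
  -- hence tauA A is true in every model
  have htauAll : ∀ r : Fin 6, Sat r (tauA A) := fun r => (sat_tau r).2 hcond
  -- modSet A ⊆ L
  have hML : modSet A ⊆ L :=
    proves_chi.1 (hA2 _ (Set.mem_union_left _ (by simp [AL])))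
  -- L ⊆ modSet A
  have hLM : L ⊆ modSet A := by
    intro r hr
    rw [mem_modSet]
    intro ψ hψ
    apply hA1 ψ hψ r
    intro χ' hχ'
    simp only [AL, Set.union_singleton, Set.mem_insert_iff,
      Set.mem_singleton_iff] at hχ'
    rcases hχ' with rfl | rfl | rfl
    · exact htauAll r
    · exact sat_Ax1 r
    · exact (sat_chi r L).2 hr
  have hMeq : modSet A = L := le_antisymm hML hLM
  -- L is nonempty
  have hLne : L.Nonempty := by
    obtain ⟨d, hd⟩ := h
    rw [Finset.mem_erase, Finset.mem_inter] at hd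
    exact ⟨d, hd.2.2⟩
  have hequiv : EquivAx A (AL L) := by
    constructor
    · intro φ hφ
      rcases hφ with rfl | hφ
      · exact proves_iff.2 (fun r _ => sat_Ax1 r)
      · rw [Set.mem_singleton_iff] at hφ
        subst hφ
        exact proves_chi.2 (hMeq ▸ le_refl _)
    · intro φ hφ
      rw [proves_iff, modSet_AL]
      intro r hr
      exact mem_modSet.1 (hLM hr) φ hφ
  refine ⟨hequiv, ?_⟩
  -- characterize provability of TLe d
  have hTLe : ∀ d : Fin 6, Proves A (TLe d) ↔ maxD L ≤ d := by
    intro d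
    rw [TLe, proves_chi, hMeq]
    constructor
    · intro hsub
      have := hsub (maxD_mem hLne)
      simpa using this
    · intro hle r hr
      simp only [Finset.mem_filter, Finset.mem_univ, true_and]
      exact le_trans (le_maxD hr) hle
  ext d
  simp only [Dsurpr, Set.mem_setOf_eq, KA_eq, hMeq, Finset.coe_erase,
    Finset.coe_inter, Set.mem_diff, Set.mem_inter_iff, Finset.mem_coe,
    Set.mem_singleton_iff, hTLe]
  constructor
  · rintro ⟨hdD, hdL, hnle⟩
    exact ⟨⟨hdD, hdL⟩, fun hdm => hnle (hdm ▸ le_refl _)⟩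
  · rintro ⟨⟨hdD, hdL⟩, hne⟩
    refine ⟨hdD, hdL, fun hle => hne ?_⟩
    exact le_antisymm (le_maxD hdL) hle
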